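/- For every T > 0 there exists a constant C₂, independent of n, such that for every integer n ≥ 2, every x ∈ [0,1] and all 0 ≤ s ≤ t ≤ T, ∫ₛᵗ ∫₀¹ (Gⁿ(t-r, x, y))² dy dr ≤ C₂·√(t-s). -/

import Mathlib

/-- `φ_j(x) = √2 sin(jπx)`. -/
noncomputable def phi (j : ℕ) (x : ℝ) : ℝ := Real.sqrt 2 * Real.sin ((j : ℝ) * Real.pi * x)

/-- The eigenvalue `λ_j^n = -4n² sin²(jπ/(2n))` of `n²Aⁿ`. -/
noncomputable def lamN (n j : ℕ) : ℝ :=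
  -4 * (n : ℝ)^2 * (Real.sin ((j : ℝ) * Real.pi / (2 * n)))^2

/-- `k_n(y) = ⌊ny⌋/n`. -/
noncomputable def kn (n : ℕ) (y : ℝ) : ℝ := (⌊(n : ℝ) * y⌋ : ℝ) / n

/-- `φ_j^n`, the piecewise linear interpolation of `φ_j` on the grid `{k/n}`:
for `x ∈ [k/n, (k+1)/n]`, `φ_j^n(x) = φ_j(k/n) + (nx - k)(φ_j((k+1)/n) - φ_j(k/n))`. -/
noncomputable def phiLin (n j : ℕ) (x : ℝ) : ℝ :=
  phi j ((⌊(n : ℝ) * x⌋ : ℝ) / n)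
    + ((n : ℝ) * x - (⌊(n : ℝ) * x⌋ : ℝ))
      * (phi j (((⌊(n : ℝ) * x⌋ : ℝ) + 1) / n) - phi j ((⌊(n : ℝ) * x⌋ : ℝ) / n))

/-- The discretized kernel `Gⁿ(t,x,y) = Σ_{j=1}^{n-1} e^{λ_j^n t} φ_j^n(x) φ_j(k_n(y))`. -/
noncomputable def GN (n : ℕ) (t x y : ℝ) : ℝ :=
  ∑ j ∈ Finset.Icc 1 (n - 1), Real.exp (lamN n j * t) * phiLin n j x * phi j (kn n y)



section AuxLemmas
open Real Finset MeasureTheory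

lemma abs_phi_le (j : ℕ) (x : ℝ) : |phi j x| ≤ Real.sqrt 2 := by
  rw [phi, abs_mul, abs_of_nonneg (Real.sqrt_nonneg 2)]
  nlinarith [Real.abs_sin_le_one ((j:ℝ) * Real.pi * x), Real.sqrt_nonneg 2,
    abs_nonneg (Real.sin ((j:ℝ) * Real.pi * x))]


lemma cos_sum_eq (n m : ℕ) (hn : 0 < n) (hm0 : 0 < m) (hm : m < 2*n) :
    ∑ k ∈ Finset.range n, Real.cos ((m:ℝ) * Real.pi * k / n) =
      if Even m then 0 else 1 := by
  have hn' : (0:ℝ) < n := by exact_mod_cast hn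
  have hm' : (0:ℝ) < m := by exact_mod_cast hm0
  have hm'' : (m:ℝ) < 2*n := by exact_mod_cast hm
  set θ : ℝ := (m:ℝ) * Real.pi / n with hθ
  have hθpos : 0 < θ/2 := by positivity
  have hθlt : θ/2 < Real.pi := by
    rw [hθ, div_lt_iff₀ (by norm_num : (0:ℝ) < 2)] at *
    rw [div_lt_iff₀ hn']
    nlinarith [Real.pi_pos]
  have hs : Real.sin (θ/2) ≠ 0 := ne_of_gt (Real.sin_pos_of_pos_of_lt_pi hθpos hθlt)
  have key : ∀ k : ℕ, Real.sin (((k:ℝ)+1)*θ - θ/2) - Real.sin ((k:ℝ)*θ - θ/2)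
      = 2 * Real.sin (θ/2) * Real.cos ((k:ℝ)*θ) := by
    intro k
    rw [Real.sin_sub_sin]
    ring_nf
  have tel : ∑ k ∈ Finset.range n, (2 * Real.sin (θ/2) * Real.cos ((k:ℝ)*θ))
      = Real.sin ((n:ℝ)*θ - θ/2) - Real.sin ((0:ℝ)*θ - θ/2) := by
    have := Finset.sum_range_sub (fun k : ℕ => Real.sin ((k:ℝ)*θ - θ/2)) n
    simp only [Nat.cast_add, Nat.cast_one, Nat.cast_zero] at this ⊢
    rw [← this]
    exact Finset.sum_congr rfl fun k _ => (key k).symm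
  have hnθ : (n:ℝ)*θ = (m:ℝ)*Real.pi := by
    rw [hθ]; field_simp
  have hend : Real.sin ((n:ℝ)*θ - θ/2) = -((-1)^m * Real.sin (θ/2)) := by
    rw [hnθ, Real.sin_nat_mul_pi_sub]
  have sum_eq : 2 * Real.sin (θ/2) * ∑ k ∈ Finset.range n, Real.cos ((k:ℝ)*θ)
      = (1 - (-1)^m) * Real.sin (θ/2) := by
    rw [Finset.mul_sum, tel, hend]
    simp only [zero_mul, zero_sub, Real.sin_neg]
    ring
  have hcong : ∑ k ∈ Finset.range n, Real.cos ((m:ℝ) * Real.pi * k / n)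
      = ∑ k ∈ Finset.range n, Real.cos ((k:ℝ)*θ) := by
    refine Finset.sum_congr rfl fun k _ => ?_
    rw [hθ]; ring_nf
  rw [hcong]
  have h2 : (2 : ℝ) * Real.sin (θ/2) ≠ 0 := by
    simp [hs]
  have heq : ∑ k ∈ Finset.range n, Real.cos ((k:ℝ)*θ) = (1 - (-1)^m)/2 := by
    apply mul_left_cancel₀ h2
    rw [sum_eq]; ring
  rw [heq]
  rcases Nat.even_or_odd m with he | ho
  · rw [if_pos he, he.neg_one_pow]; norm_num
  · rw [if_neg (Nat.not_even_iff_odd.mpr ho), ho.neg_one_pow]; norm_num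


lemma phi_orth_aux (n : ℕ) (hn : 2 ≤ n) (i j : ℕ) (hi1 : 1 ≤ i) (hi2 : i ≤ n-1)
    (hj1 : 1 ≤ j) (hj2 : j ≤ n-1) (hji : j ≤ i) :
    ∑ k ∈ Finset.range n, phi i ((k:ℝ)/n) * phi j ((k:ℝ)/n)
      = if i = j then (n:ℝ) else 0 := by
  have hcast : ((i-j:ℕ):ℝ) = (i:ℝ)-(j:ℝ) := by
    push_cast [hji]; ring
  have key : ∀ k:ℕ, phi i ((k:ℝ)/n) * phi j ((k:ℝ)/n)
      = Real.cos (((i-j:ℕ):ℝ)*Real.pi*k/n) - Real.cos (((i+j:ℕ):ℝ)*Real.pi*k/n) := by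
    intro k
    rw [Real.cos_sub_cos, hcast]
    push_cast
    have e1 : ((((i:ℝ)-j)*Real.pi*k/n) + (((i:ℝ)+j)*Real.pi*k/n))/2
        = (i:ℝ)*Real.pi*((k:ℝ)/n) := by ring
    have e2 : ((((i:ℝ)-j)*Real.pi*k/n) - (((i:ℝ)+j)*Real.pi*k/n))/2
        = -((j:ℝ)*Real.pi*((k:ℝ)/n)) := by ring
    rw [e1, e2, Real.sin_neg, phi, phi]
    have h2 : Real.sqrt 2 * Real.sqrt 2 = 2 := Real.mul_self_sqrt (by norm_num)
    linear_combination (Real.sin ((i:ℝ)*Real.pi*((k:ℝ)/n)) * Real.sin ((j:ℝ)*Real.pi*((k:ℝ)/n))) * h2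
  rw [Finset.sum_congr rfl fun k _ => key k, Finset.sum_sub_distrib]
  have hn0 : 0 < n := by omega
  have hsum2 : ∑ k ∈ Finset.range n, Real.cos (((i+j:ℕ):ℝ)*Real.pi*k/n)
      = if Even (i+j) then 0 else 1 := cos_sum_eq n (i+j) hn0 (by omega) (by omega)
  rcases eq_or_lt_of_le hji with heq | hlt
  · subst heq
    rw [if_pos rfl]
    have h0 : ∀ k ∈ Finset.range n, Real.cos (((j-j:ℕ):ℝ)*Real.pi*k/n) = 1 := by
      intro k _; simp
    rw [Finset.sum_congr rfl h0, Finset.sum_const, hsum2, if_pos (by simp [Nat.even_add])]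
    simp
  · rw [if_neg (by omega)]
    have hsum1 : ∑ k ∈ Finset.range n, Real.cos (((i-j:ℕ):ℝ)*Real.pi*k/n)
        = if Even (i-j) then 0 else 1 := cos_sum_eq n (i-j) hn0 (by omega) (by omega)
    rw [hsum1, hsum2]
    have hpar : Even (i-j) ↔ Even (i+j) := by
      rw [Nat.even_sub hji, Nat.even_add]
    by_cases he : Even (i-j)
    · rw [if_pos he, if_pos (hpar.mp he), sub_self]
    · rw [if_neg he, if_neg (fun h => he (hpar.mpr h)), sub_self]

lemma phi_orth (n : ℕ) (hn : 2 ≤ n) (i j : ℕ) (hi1 : 1 ≤ i) (hi2 : i ≤ n-1)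
    (hj1 : 1 ≤ j) (hj2 : j ≤ n-1) :
    ∑ k ∈ Finset.range n, phi i ((k:ℝ)/n) * phi j ((k:ℝ)/n)
      = if i = j then (n:ℝ) else 0 := by
  rcases le_total j i with h | h
  · exact phi_orth_aux n hn i j hi1 hi2 hj1 hj2 h
  · have := phi_orth_aux n hn j i hj1 hj2 hi1 hi2 h
    have comm : ∑ k ∈ Finset.range n, phi i ((k:ℝ)/n) * phi j ((k:ℝ)/n)
        = ∑ k ∈ Finset.range n, phi j ((k:ℝ)/n) * phi i ((k:ℝ)/n) :=
      Finset.sum_congr rfl fun k _ => mul_comm _ _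
    rw [comm, this]
    by_cases hij : i = j
    · rw [if_pos hij, if_pos hij.symm]
    · rw [if_neg hij, if_neg (fun hh => hij hh.symm)]


lemma step_integral (n : ℕ) (hn : 0 < n) (F : ℝ → ℝ) :
    ∫ y in (0:ℝ)..1, F (kn n y) = (∑ k ∈ Finset.range n, F ((k:ℝ)/n)) / n := by
  have hn' : (0:ℝ) < n := by exact_mod_cast hn
  set a : ℕ → ℝ := fun k => (k:ℝ)/n with ha
  have hle : ∀ k : ℕ, a k ≤ a (k+1) := by
    intro k; rw [ha]; push_cast; gcongr; linarith
  have hstep : ∀ k : ℕ, ∀ y ∈ Set.Ioo (a k) (a (k+1)), F (kn n y) = F ((k:ℝ)/n) := by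
    intro k y hy
    obtain ⟨hy1, hy2⟩ := hy
    rw [ha] at hy1 hy2
    push_cast at hy2
    have h1 : (k:ℝ) < (n:ℝ)*y := by
      calc (k:ℝ) = ((k:ℝ)/n)*n := by field_simp
        _ < y*n := mul_lt_mul_of_pos_right hy1 hn'
        _ = (n:ℝ)*y := by ring
    have h2 : (n:ℝ)*y < (k:ℝ)+1 := by
      calc (n:ℝ)*y = y*n := by ring
        _ < (((k:ℝ)+1)/n)*n := mul_lt_mul_of_pos_right hy2 hn'
        _ = (k:ℝ)+1 := by field_simp
    have hfl : ⌊(n:ℝ)*y⌋ = (k:ℤ) := by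
      rw [Int.floor_eq_iff] <;> constructor <;> push_cast <;> linarith
    rw [kn, hfl]
    norm_num
  have hae : ∀ k : ℕ, (fun y => F (kn n y))
      =ᵐ[volume.restrict (Set.uIoc (a k) (a (k+1)))] (fun _ => F ((k:ℝ)/n)) := by
    intro k
    rw [Set.uIoc_of_le (hle k), ← Measure.restrict_congr_set Ioo_ae_eq_Ioc]
    exact (ae_restrict_iff' measurableSet_Ioo).2
      (Filter.Eventually.of_forall (fun y hy => hstep k y hy))
  have hint : ∀ k : ℕ, IntervalIntegrable (fun y => F (kn n y)) volume (a k) (a (k+1)) :=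
    fun k => (intervalIntegrable_const).congr_ae ((hae k).symm)
  have hval : ∀ k : ℕ, (∫ y in a k..a (k+1), F (kn n y)) = F ((k:ℝ)/n) / n := by
    intro k
    rw [intervalIntegral.integral_congr_ae ((ae_restrict_iff' measurableSet_uIoc).mp (hae k))]
    rw [intervalIntegral.integral_const, smul_eq_mul]
    rw [ha]
    push_cast
    field_simp
    ring
  calc ∫ y in (0:ℝ)..1, F (kn n y) = ∫ y in (a 0)..(a n), F (kn n y) := by
        rw [ha]; norm_num [div_self hn'.ne']
    _ = ∑ k ∈ Finset.range n, ∫ y in a k..a (k+1), F (kn n y) :=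
        (intervalIntegral.sum_integral_adjacent_intervals (fun k _ => hint k)).symm
    _ = ∑ k ∈ Finset.range n, F ((k:ℝ)/n) / n := Finset.sum_congr rfl fun k _ => hval k
    _ = (∑ k ∈ Finset.range n, F ((k:ℝ)/n)) / n := by rw [Finset.sum_div]

lemma inner_integral (n : ℕ) (hn : 2 ≤ n) (c : ℕ → ℝ) :
    (∫ y in (0:ℝ)..1, (∑ j ∈ Finset.Icc 1 (n-1), c j * phi j (kn n y))^2)
      = ∑ j ∈ Finset.Icc 1 (n-1), (c j)^2 := by
  have h0 : (∫ y in (0:ℝ)..1, (∑ j ∈ Finset.Icc 1 (n-1), c j * phi j (kn n y))^2)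
      = (∑ k ∈ Finset.range n, (∑ j ∈ Finset.Icc 1 (n-1), c j * phi j ((k:ℝ)/n))^2) / n :=
    step_integral n (by omega) (fun z => (∑ j ∈ Finset.Icc 1 (n-1), c j * phi j z)^2)
  rw [h0]
  have expand : ∀ z : ℝ, (∑ j ∈ Finset.Icc 1 (n-1), c j * phi j z)^2
      = ∑ i ∈ Finset.Icc 1 (n-1), ∑ j ∈ Finset.Icc 1 (n-1),
          (c i * c j) * (phi i z * phi j z) := by
    intro z
    rw [sq, Finset.sum_mul_sum]
    exact Finset.sum_congr rfl fun i _ => Finset.sum_congr rfl fun j _ => by ring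
  simp only [expand]
  rw [Finset.sum_comm]
  have inner : ∀ i ∈ Finset.Icc 1 (n-1),
      (∑ k ∈ Finset.range n, ∑ j ∈ Finset.Icc 1 (n-1),
        (c i * c j) * (phi i ((k:ℝ)/n) * phi j ((k:ℝ)/n)))
      = (c i)^2 * n := by
    intro i hi
    rw [Finset.sum_comm]
    obtain ⟨hi1, hi2⟩ := Finset.mem_Icc.mp hi
    have hj : ∀ j ∈ Finset.Icc 1 (n-1),
        (∑ k ∈ Finset.range n, (c i * c j) * (phi i ((k:ℝ)/n) * phi j ((k:ℝ)/n)))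
        = if i = j then (c i * c j) * n else 0 := by
      intro j hjm
      obtain ⟨hj1, hj2⟩ := Finset.mem_Icc.mp hjm
      rw [← Finset.mul_sum, phi_orth n hn i j hi1 hi2 hj1 hj2]
      by_cases hij : i = j
      · rw [if_pos hij, if_pos hij]
      · rw [if_neg hij, if_neg hij, mul_zero]
    have hsum := Finset.sum_congr rfl hj
    rw [hsum, Finset.sum_ite_eq (Finset.Icc 1 (n-1)) i (fun j => (c i * c j) * (n:ℝ)),
      if_pos hi, sq]
  have hfin := Finset.sum_congr rfl inner
  rw [hfin, ← Finset.sum_mul]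
  have hn' : (n:ℝ) ≠ 0 := by
    have : 0 < n := by omega
    positivity
  rw [mul_div_assoc, div_self hn', mul_one]


lemma abs_phiLin_le (n j : ℕ) (x : ℝ) : |phiLin n j x| ≤ Real.sqrt 2 := by
  have h0 : (0:ℝ) ≤ (n:ℝ)*x - (⌊(n:ℝ)*x⌋:ℝ) := sub_nonneg.2 (Int.floor_le _)
  have h1 : (n:ℝ)*x - (⌊(n:ℝ)*x⌋:ℝ) ≤ 1 := by
    have := Int.lt_floor_add_one ((n:ℝ)*x); linarith
  have hA := abs_phi_le j ((⌊(n:ℝ)*x⌋:ℝ)/n)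
  have hB := abs_phi_le j (((⌊(n:ℝ)*x⌋:ℝ)+1)/n)
  rw [phiLin]
  set θ : ℝ := (n:ℝ)*x - (⌊(n:ℝ)*x⌋:ℝ) with hθ
  set A := phi j ((⌊(n:ℝ)*x⌋:ℝ)/n) with hA'
  set B := phi j (((⌊(n:ℝ)*x⌋:ℝ)+1)/n) with hB'
  have he : A + θ*(B-A) = (1-θ)*A + θ*B := by ring
  rw [he]
  calc |(1-θ)*A + θ*B| ≤ |(1-θ)*A| + |θ*B| := abs_add_le _ _
    _ = (1-θ)*|A| + θ*|B| := by
        rw [abs_mul, abs_mul, abs_of_nonneg (by linarith), abs_of_nonneg h0]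
    _ ≤ Real.sqrt 2 := by nlinarith [abs_nonneg A, abs_nonneg B]

lemma phiLin_sq_le (n j : ℕ) (x : ℝ) : (phiLin n j x)^2 ≤ 2 := by
  have h := abs_phiLin_le n j x
  have h2 : Real.sqrt 2 ^ 2 = 2 := Real.sq_sqrt (by norm_num)
  nlinarith [abs_nonneg (phiLin n j x), sq_abs (phiLin n j x)]

lemma lamN_le (n j : ℕ) (hj1 : 1 ≤ j) (hjn : j ≤ n) (hn : 0 < n) :
    lamN n j ≤ -4 * (j:ℝ)^2 := by
  have hn' : (0:ℝ) < n := by exact_mod_cast hn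
  have hj' : (0:ℝ) < j := by exact_mod_cast hj1
  have hjn' : (j:ℝ) ≤ n := by exact_mod_cast hjn
  have hx0 : 0 ≤ (j:ℝ)*Real.pi/(2*n) := by positivity
  have hx2 : (j:ℝ)*Real.pi/(2*n) ≤ Real.pi/2 := by
    rw [div_le_div_iff₀ (by positivity) two_pos]
    nlinarith [Real.pi_pos]
  have hsin := Real.mul_le_sin hx0 hx2
  have hval : 2/Real.pi * ((j:ℝ)*Real.pi/(2*n)) = (j:ℝ)/n := by
    field_simp
  have h1 : (j:ℝ)/n ≤ Real.sin ((j:ℝ)*Real.pi/(2*n)) := by rw [← hval]; exact hsin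
  have h2 : ((j:ℝ)/n)^2 ≤ (Real.sin ((j:ℝ)*Real.pi/(2*n)))^2 := by
    nlinarith [div_pos hj' hn']
  rw [lamN]
  have hjn2 : ((j:ℝ)/n)^2 * (n:ℝ)^2 = (j:ℝ)^2 := by field_simp
  nlinarith [h2, sq_nonneg ((n:ℝ))]

lemma exp_time_integral_le {lam s t : ℝ} (hl : lam < 0) (hst : s ≤ t) :
    (∫ r in s..t, Real.exp (2*lam*(t - r))) ≤ min (t-s) (1/(-(2*lam))) := by
  have h2 : (2*lam) ≠ 0 := by intro h; nlinarith [h]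
  have hcomp : (∫ r in s..t, Real.exp (2*lam*(t-r)))
      = ∫ u in (t-t)..(t-s), Real.exp (2*lam*u) :=
    intervalIntegral.integral_comp_sub_left (fun u => Real.exp (2*lam*u)) t
  have hval : (∫ u in (0:ℝ)..(t-s), Real.exp (2*lam*u))
      = (Real.exp (2*lam*(t-s)) - 1)/(2*lam) := by
    rw [intervalIntegral.integral_comp_mul_left (fun u => Real.exp u) h2,
      integral_exp, mul_zero, Real.exp_zero, smul_eq_mul]
    field_simp
  rw [hcomp, sub_self, hval]
  set E := Real.exp (2*lam*(t-s)) with hE'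
  have hE : 0 < E := Real.exp_pos _
  have hE2 : 2*lam*(t-s) + 1 ≤ E := by
    have := Real.add_one_le_exp (2*lam*(t-s)); linarith
  apply le_min
  · rw [div_le_iff_of_neg (by linarith : 2*lam < 0)]
    linarith
  · have hrw : (E-1)/(2*lam) = (1-E)/(-(2*lam)) := by
      rw [div_neg, ← neg_div, neg_sub]
    rw [hrw]
    gcongr
    · linarith
    · linarith


lemma sum_min_le (m : ℕ) (τ T : ℝ) (hτ0 : 0 ≤ τ) (hτT : τ ≤ T) :
    ∑ j ∈ Finset.Icc 1 m, min τ (1/(8*(j:ℝ)^2)) ≤ (3 + Real.sqrt T) * Real.sqrt τ := by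
  rcases eq_or_lt_of_le hτ0 with h0 | h0
  · have hz : ∀ j ∈ Finset.Icc 1 m, min τ (1/(8*(j:ℝ)^2)) ≤ 0 :=
      fun j _ => (min_le_left _ _).trans (le_of_eq h0.symm)
    calc ∑ j ∈ Finset.Icc 1 m, min τ (1/(8*(j:ℝ)^2)) ≤ ∑ j ∈ Finset.Icc 1 m, (0:ℝ) :=
          Finset.sum_le_sum hz
      _ = 0 := by simp
      _ ≤ (3 + Real.sqrt T) * Real.sqrt τ := by positivity
  · set N : ℕ := ⌈(Real.sqrt τ)⁻¹⌉₊ with hN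
    have hτs : 0 < Real.sqrt τ := Real.sqrt_pos.2 h0
    have hN1 : 1 ≤ N := Nat.one_le_ceil_iff.mpr (by positivity)
    have hNpos : (0:ℝ) < N := by exact_mod_cast hN1
    have hNle : (N:ℝ) < (Real.sqrt τ)⁻¹ + 1 := Nat.ceil_lt_add_one (by positivity)
    have hNge : (Real.sqrt τ)⁻¹ ≤ (N:ℝ) := Nat.le_ceil _
    have step1 : ∑ j ∈ Finset.Icc 1 m, min τ (1/(8*(j:ℝ)^2))
        ≤ ∑ j ∈ Finset.Icc 1 m, (if j ≤ N then τ else 1/(8*(j:ℝ)^2)) := by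
      apply Finset.sum_le_sum; intro j _
      by_cases h : j ≤ N
      · rw [if_pos h]; exact min_le_left _ _
      · rw [if_neg h]; exact min_le_right _ _
    rw [Finset.sum_ite] at step1
    have c1 : ∑ j ∈ (Finset.Icc 1 m).filter (fun j => j ≤ N), τ ≤ (N:ℝ) * τ := by
      rw [Finset.sum_const, nsmul_eq_mul]
      apply mul_le_mul_of_nonneg_right ?_ hτ0
      have hsub : (Finset.Icc 1 m).filter (fun j => j ≤ N) ⊆ Finset.Icc 1 N := by
        intro j hj
        simp only [Finset.mem_filter, Finset.mem_Icc] at *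
        omega
      have hcard := Finset.card_le_card hsub
      calc (((Finset.Icc 1 m).filter (fun j => j ≤ N)).card : ℝ)
          ≤ ((Finset.Icc 1 N).card : ℝ) := by exact_mod_cast hcard
        _ = N := by rw [Nat.card_Icc]; simp
    have c2 : ∑ j ∈ (Finset.Icc 1 m).filter (fun j => ¬ j ≤ N), 1/(8*(j:ℝ)^2)
        ≤ (N:ℝ)⁻¹/8 := by
      have hsub : (Finset.Icc 1 m).filter (fun j => ¬ j ≤ N) ⊆ Finset.Ioc N m := by
        intro j hj
        simp only [Finset.mem_filter, Finset.mem_Icc, Finset.mem_Ioc] at *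
        omega
      have h1 : ∑ j ∈ (Finset.Icc 1 m).filter (fun j => ¬ j ≤ N), 1/(8*(j:ℝ)^2)
          ≤ ∑ j ∈ Finset.Ioc N m, 1/(8*(j:ℝ)^2) :=
        Finset.sum_le_sum_of_subset_of_nonneg hsub (fun j _ _ => by positivity)
      have h2 : ∑ j ∈ Finset.Ioc N m, 1/(8*(j:ℝ)^2) ≤ (N:ℝ)⁻¹/8 := by
        rcases le_or_gt N m with hNm | hNm
        · have hb := sum_Ioc_inv_sq_le_sub (α := ℝ) (k := N) (n := m) (by omega) hNm
          have heq : ∑ j ∈ Finset.Ioc N m, 1/(8*(j:ℝ)^2)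
              = (∑ j ∈ Finset.Ioc N m, ((j:ℝ)^2)⁻¹)/8 := by
            rw [Finset.sum_div]
            refine Finset.sum_congr rfl fun j _ => ?_
            rw [one_div, mul_inv, div_eq_mul_inv, mul_comm]
          rw [heq]
          have hm0 : (0:ℝ) ≤ (m:ℝ)⁻¹ := by positivity
          linarith
        · rw [Finset.Ioc_eq_empty (by omega)]
          simp
          positivity
      exact h1.trans h2
    have hss : Real.sqrt τ * Real.sqrt τ = τ := Real.mul_self_sqrt hτ0
    have hNτ : (N:ℝ)*τ ≤ Real.sqrt τ + Real.sqrt T * Real.sqrt τ := by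
      have h3 : (N:ℝ)*τ ≤ ((Real.sqrt τ)⁻¹ + 1)*τ := mul_le_mul_of_nonneg_right hNle.le hτ0
      have h4 : (Real.sqrt τ)⁻¹*τ = Real.sqrt τ := by
        rw [← hss]; field_simp
        rw [Real.sqrt_sq hτs.le]
      have h5 : τ ≤ Real.sqrt T * Real.sqrt τ := by
        have h6 := Real.sqrt_le_sqrt hτT
        nlinarith
      nlinarith
    have hNi : (N:ℝ)⁻¹ ≤ Real.sqrt τ := by
      have hv := inv_anti₀ (by positivity : (0:ℝ) < (Real.sqrt τ)⁻¹) hNge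
      rwa [inv_inv] at hv
    calc ∑ j ∈ Finset.Icc 1 m, min τ (1/(8*(j:ℝ)^2))
        ≤ (N:ℝ)*τ + (N:ℝ)⁻¹/8 := by linarith
      _ ≤ (3 + Real.sqrt T) * Real.sqrt τ := by nlinarith [hτs.le, hNi, hNτ]




end AuxLemmas

open Real Finset MeasureTheory in
/-- For every `T > 0` there is a constant `C₂` independent of `n` such that
`∫ₛᵗ∫₀¹ (Gⁿ(t-r,x,y))² dy dr ≤ C₂ √(t-s)` for all `x ∈ [0,1]`, `0 ≤ s ≤ t ≤ T`. -/

theorem GN_square_integral_bound (T : ℝ) (hT : 0 < T) :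
    ∃ C₂ : ℝ, ∀ n : ℕ, 2 ≤ n → ∀ x ∈ Set.Icc (0:ℝ) 1, ∀ s t : ℝ,
      0 ≤ s → s ≤ t → t ≤ T →
      (∫ r in s..t, ∫ y in (0:ℝ)..1, (GN n (t - r) x y)^2) ≤ C₂ * Real.sqrt (t - s) := by
  refine ⟨2*(3 + Real.sqrt T), ?_⟩
  intro n hn x _hx s t hs hst htT
  have hτ0 : 0 ≤ t - s := by linarith
  have hτT : t - s ≤ T := by linarith
  have hinner : ∀ r : ℝ, (∫ y in (0:ℝ)..1, (GN n (t - r) x y)^2)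
      = ∑ j ∈ Finset.Icc 1 (n-1), (phiLin n j x)^2 * Real.exp (2 * lamN n j * (t-r)) := by
    intro r
    have h1 : ∀ y : ℝ, GN n (t-r) x y = ∑ j ∈ Finset.Icc 1 (n-1),
        (Real.exp (lamN n j * (t-r)) * phiLin n j x) * phi j (kn n y) := by
      intro y
      rw [GN]
    simp only [h1]
    rw [inner_integral n hn (fun j => Real.exp (lamN n j * (t-r)) * phiLin n j x)]
    refine Finset.sum_congr rfl fun j _ => ?_
    rw [mul_pow, sq (Real.exp _), ← Real.exp_add]
    ring_nf
  simp only [hinner]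
  rw [intervalIntegral.integral_finset_sum]
  swap
  · intro j _
    apply Continuous.intervalIntegrable
    exact continuous_const.mul (Real.continuous_exp.comp
      (continuous_const.mul (continuous_const.sub continuous_id)))
  have hterm : ∀ j ∈ Finset.Icc 1 (n-1),
      (∫ r in s..t, (phiLin n j x)^2 * Real.exp (2 * lamN n j * (t-r)))
      ≤ 2 * min (t-s) (1/(8*(j:ℝ)^2)) := by
    intro j hj
    obtain ⟨hj1, hj2⟩ := Finset.mem_Icc.mp hj
    have hj' : (1:ℝ) ≤ (j:ℝ) := by exact_mod_cast hj1
    have hlam : lamN n j ≤ -4*(j:ℝ)^2 := lamN_le n j hj1 (by omega) (by omega)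
    have hlamneg : lamN n j < 0 := lt_of_le_of_lt hlam (by nlinarith)
    rw [intervalIntegral.integral_const_mul]
    have hint := exp_time_integral_le hlamneg hst
    have hmin : min (t-s) (1/(-(2*lamN n j))) ≤ min (t-s) (1/(8*(j:ℝ)^2)) := by
      apply min_le_min le_rfl
      apply one_div_le_one_div_of_le (by nlinarith)
      nlinarith
    have hsq := phiLin_sq_le n j x
    have hnonneg : 0 ≤ ∫ r in s..t, Real.exp (2*lamN n j*(t-r)) :=
      intervalIntegral.integral_nonneg hst (fun u _ => (Real.exp_pos _).le)
    have hmain : (∫ r in s..t, Real.exp (2*lamN n j*(t-r))) ≤ min (t-s) (1/(8*(j:ℝ)^2)) :=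
      hint.trans hmin
    nlinarith [mul_le_mul_of_nonneg_right hsq hnonneg]
  calc ∑ j ∈ Finset.Icc 1 (n-1), ∫ r in s..t, (phiLin n j x)^2 * Real.exp (2*lamN n j*(t-r))
      ≤ ∑ j ∈ Finset.Icc 1 (n-1), 2 * min (t-s) (1/(8*(j:ℝ)^2)) := Finset.sum_le_sum hterm
    _ = 2 * ∑ j ∈ Finset.Icc 1 (n-1), min (t-s) (1/(8*(j:ℝ)^2)) := by rw [Finset.mul_sum]
    _ ≤ 2 * ((3 + Real.sqrt T) * Real.sqrt (t-s)) := by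
        have := sum_min_le (n-1) (t-s) T hτ0 hτT
        linarith
    _ = 2*(3 + Real.sqrt T) * Real.sqrt (t-s) := by ring
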